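/- In B_6, with b = σ_1σ_3^{−1} and r = α^2σ_1^{−10} where α = σ_1⋯σ_5 and a = σ_1σ_2^{−1}, one has σ_1σ_4^{−1} = b^{−9}·r·a·r^{−1}·b^{10}. -/

import Mathlib

/-- Artin braid relators for the braid group on `n` strands, with generators
`FreeGroup.of i` corresponding to `σ_{i+1}` for `i : Fin (n-1)`. -/
def braidRels (n : ℕ) : Set (FreeGroup (Fin (n - 1))) :=
  {r | ∃ i j : Fin (n - 1),
      ((j : ℕ) ≥ (i : ℕ) + 2 ∧
        r = FreeGroup.of i * FreeGroup.of j * (FreeGroup.of i)⁻¹ * (FreeGroup.of j)⁻¹) ∨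
      ((j : ℕ) = (i : ℕ) + 1 ∧
        r = FreeGroup.of i * FreeGroup.of j * FreeGroup.of i *
          (FreeGroup.of j * FreeGroup.of i * FreeGroup.of j)⁻¹)}

/-- The braid group on `n` strands. -/
def BraidGroup (n : ℕ) : Type := PresentedGroup (braidRels n)

instance (n : ℕ) : Group (BraidGroup n) :=
  inferInstanceAs (Group (PresentedGroup (braidRels n)))

/-- The Artin generator `σ_i` of `BraidGroup n`, for `1 ≤ i ≤ n-1` (junk value `1` otherwise). -/
def σ {n : ℕ} (i : ℕ) : BraidGroup n :=
  if h : 1 ≤ i ∧ i < n then PresentedGroup.of (⟨i - 1, by omega⟩ : Fin (n - 1)) else 1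

/-- The element `α = σ_1 σ_2 ⋯ σ_{n-1}`. -/
def α (n : ℕ) : BraidGroup n := ((List.range (n - 1)).map (fun i => σ (i + 1))).prod

/-- The half-twist `σ_j` for an index `j` taken modulo `n`, defined by conjugating
`σ_1` by the rotation `α`: `σ_{1+m} = α^m σ_1 α^{-m}`. -/
def σm {n : ℕ} (j : ℤ) : BraidGroup n := (α n) ^ (j - 1) * σ 1 * (α n) ^ (1 - j)

lemma rel_one {n : ℕ} {r : FreeGroup (Fin (n-1))} (h : r ∈ braidRels n) :
    (PresentedGroup.mk (braidRels n) r : BraidGroup n) = 1 :=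
  (QuotientGroup.eq_one_iff r).mpr (Subgroup.subset_normalClosure h)

lemma sigma_of (i : ℕ) (h1 : 1 ≤ i) (h2 : i < 6) :
    (σ i : BraidGroup 6) = PresentedGroup.of (⟨i - 1, by omega⟩ : Fin 5) :=
  dif_pos ⟨h1, h2⟩

lemma braid_comm (i j : ℕ) (h1 : 1 ≤ i) (hj : j ≤ 5) (h : i + 2 ≤ j) :
    Commute (σ i : BraidGroup 6) (σ j) := by
  have hmem : (FreeGroup.of (⟨i - 1, by omega⟩ : Fin 5) * FreeGroup.of (⟨j - 1, by omega⟩ : Fin 5)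
      * (FreeGroup.of (⟨i - 1, by omega⟩ : Fin 5))⁻¹ *
        (FreeGroup.of (⟨j - 1, by omega⟩ : Fin 5))⁻¹) ∈ braidRels 6 :=
    ⟨⟨i - 1, by omega⟩, ⟨j - 1, by omega⟩, Or.inl ⟨by simp; omega, rfl⟩⟩
  have h0 := rel_one hmem
  rw [map_mul, map_mul, map_mul, map_inv, map_inv] at h0
  rw [sigma_of i h1 (by omega), sigma_of j (by omega) (by omega)]
  exact commutatorElement_eq_one_iff_commute.mp h0

lemma braid_braid (i : ℕ) (h1 : 1 ≤ i) (hi : i + 1 ≤ 5) :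
    (σ i : BraidGroup 6) * σ (i + 1) * σ i = σ (i + 1) * σ i * σ (i + 1) := by
  have hmem : (FreeGroup.of (⟨i - 1, by omega⟩ : Fin 5) * FreeGroup.of (⟨i, by omega⟩ : Fin 5)
      * FreeGroup.of (⟨i - 1, by omega⟩ : Fin 5) *
      (FreeGroup.of (⟨i, by omega⟩ : Fin 5) * FreeGroup.of (⟨i - 1, by omega⟩ : Fin 5) *
        FreeGroup.of (⟨i, by omega⟩ : Fin 5))⁻¹) ∈ braidRels 6 :=
    ⟨⟨i - 1, by omega⟩, ⟨i, by omega⟩, Or.inr ⟨by simp; omega, rfl⟩⟩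
  have h0 := rel_one hmem
  rw [map_mul, map_mul, map_mul, map_inv, map_mul, map_mul] at h0
  rw [sigma_of i h1 (by omega), sigma_of (i + 1) (by omega) (by omega)]
  have := mul_inv_eq_one.mp h0
  exact this

lemma alpha6 : α 6 = σ 1 * (σ 2 * (σ 3 * (σ 4 * σ 5))) := by
  show ((List.range 5).map (fun i => σ (i + 1))).prod = _
  simp [List.range_succ]


theorem test : True := trivial

lemma bext {G : Type*} [Group G] {x y : G} (h : x * y * x = y * x * y) (t : G) :
    x * (y * (x * t)) = y * (x * (y * t)) := by
  rw [← mul_assoc, ← mul_assoc, h, mul_assoc, mul_assoc]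

lemma swap1 : (α 6) * σ 1 = σ 2 * α 6 := by
  have c13 := braid_comm 1 3 (by norm_num) (by norm_num) (by norm_num)
  have c14 := braid_comm 1 4 (by norm_num) (by norm_num) (by norm_num)
  have c15 := braid_comm 1 5 (by norm_num) (by norm_num) (by norm_num)
  have b12 := braid_braid 1 (by norm_num) (by norm_num)
  rw [alpha6]
  simp only [mul_assoc]
  rw [← c15.eq, c14.symm.left_comm, c13.symm.left_comm, bext b12]

lemma swap2 : (α 6) * σ 2 = σ 3 * α 6 := by
  have c13 := braid_comm 1 3 (by norm_num) (by norm_num) (by norm_num)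
  have c24 := braid_comm 2 4 (by norm_num) (by norm_num) (by norm_num)
  have c25 := braid_comm 2 5 (by norm_num) (by norm_num) (by norm_num)
  have b23 := braid_braid 2 (by norm_num) (by norm_num)
  rw [alpha6]
  simp only [mul_assoc]
  rw [← c25.eq, c24.symm.left_comm, bext b23, c13.left_comm]

lemma swap3 : (α 6) * σ 3 = σ 4 * α 6 := by
  have c14 := braid_comm 1 4 (by norm_num) (by norm_num) (by norm_num)
  have c24 := braid_comm 2 4 (by norm_num) (by norm_num) (by norm_num)
  have c35 := braid_comm 3 5 (by norm_num) (by norm_num) (by norm_num)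
  have b34 := braid_braid 3 (by norm_num) (by norm_num)
  rw [alpha6]
  simp only [mul_assoc]
  rw [← c35.eq, bext b34, c24.left_comm, c14.left_comm]

lemma conj2 (i : ℕ) (h1 : 1 ≤ i) (h2 : i ≤ 2) :
    (α 6) ^ 2 * σ i * ((α 6) ^ 2)⁻¹ = σ (i + 2) := by
  have s1 : (α 6) * σ i * (α 6)⁻¹ = σ (i + 1) := by
    interval_cases i
    · rw [swap1]; group
    · rw [swap2]; group
  have s2 : (α 6) * σ (i + 1) * (α 6)⁻¹ = σ (i + 2) := by
    interval_cases i
    · rw [swap2]; group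
    · rw [swap3]; group
  calc (α 6) ^ 2 * σ i * ((α 6) ^ 2)⁻¹
      = (α 6) * ((α 6) * σ i * (α 6)⁻¹) * (α 6)⁻¹ := by
        rw [pow_two, mul_inv_rev]; simp only [mul_assoc]
    _ = (α 6) * σ (i + 1) * (α 6)⁻¹ := by rw [s1]
    _ = σ (i + 2) := s2

lemma aux {G : Type*} [Group G] (x y z : G) (hxy : Commute x y) (hxz : Commute x z) :
    x * z⁻¹ = ((x * y⁻¹) ^ 9)⁻¹ * ((y ^ 9)⁻¹ * z⁻¹ * y ^ 10) * (x * y⁻¹) ^ 10 := by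
  have h9 : (x * y⁻¹) ^ 9 = x ^ 9 * (y ^ 9)⁻¹ := by
    rw [hxy.inv_right.mul_pow, inv_pow]
  have h10 : (x * y⁻¹) ^ 10 = x ^ 10 * (y ^ 10)⁻¹ := by
    rw [hxy.inv_right.mul_pow, inv_pow]
  rw [h9, h10, mul_inv_rev, inv_inv]
  simp only [mul_assoc]
  rw [((hxy.pow_pow 9 9).inv_inv).left_comm, mul_inv_cancel_left,
    (hxz.pow_left 9).inv_inv.left_comm,
    ((hxy.pow_pow 9 10).inv_left).left_comm,
    show (x : G) ^ 10 = x ^ 9 * x by group]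
  simp only [mul_assoc]
  rw [inv_mul_cancel_left, ← (hxy.pow_right 10).left_comm, mul_inv_cancel, mul_one,
    ← hxz.inv_right.eq]

theorem B6_sigma14_identity :
    ∀ a b r : BraidGroup 6, a = σ 1 * (σ 2)⁻¹ → b = σ 1 * (σ 3)⁻¹ →
      r = (α 6) ^ 2 * ((σ 1 : BraidGroup 6) ^ 10)⁻¹ →
      σ 1 * (σ 4)⁻¹ = (b ^ 9)⁻¹ * r * a * r⁻¹ * b ^ 10 := by
  intro a b r ha hb hr
  subst ha hb hr
  set A := (α 6 : BraidGroup 6) ^ 2 with hA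
  have e1 : A * σ 1 * A⁻¹ = σ 3 := conj2 1 (by norm_num) (by norm_num)
  have e2 : A * σ 2 * A⁻¹ = σ 4 := conj2 2 (by norm_num) (by norm_num)
  have key : A * ((σ 1 : BraidGroup 6) ^ 10)⁻¹ * (σ 1 * (σ 2)⁻¹) *
      (A * ((σ 1 : BraidGroup 6) ^ 10)⁻¹)⁻¹
      = ((σ 3 : BraidGroup 6) ^ 9)⁻¹ * (σ 4)⁻¹ * (σ 3) ^ 10 := by
    have expand : A * ((σ 1 : BraidGroup 6) ^ 10)⁻¹ * (σ 1 * (σ 2)⁻¹) *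
        (A * ((σ 1 : BraidGroup 6) ^ 10)⁻¹)⁻¹
        = (A * (σ 1) ^ 9 * A⁻¹)⁻¹ * (A * σ 2 * A⁻¹)⁻¹ * (A * (σ 1) ^ 10 * A⁻¹) := by
      group
    rw [expand, ← conj_pow, ← conj_pow, e1, e2]
  calc (σ 1 : BraidGroup 6) * (σ 4)⁻¹
      = ((σ 1 * (σ 3)⁻¹ : BraidGroup 6) ^ 9)⁻¹ *
        (((σ 3 : BraidGroup 6) ^ 9)⁻¹ * (σ 4)⁻¹ * (σ 3) ^ 10) * (σ 1 * (σ 3)⁻¹) ^ 10 :=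
        aux _ _ _ (braid_comm 1 3 (by norm_num) (by norm_num) (by norm_num))
          (braid_comm 1 4 (by norm_num) (by norm_num) (by norm_num))
    _ = ((σ 1 * (σ 3)⁻¹ : BraidGroup 6) ^ 9)⁻¹ * (A * ((σ 1 : BraidGroup 6) ^ 10)⁻¹ *
          (σ 1 * (σ 2)⁻¹) * (A * ((σ 1 : BraidGroup 6) ^ 10)⁻¹)⁻¹) * (σ 1 * (σ 3)⁻¹) ^ 10 := by
        rw [key]
    _ = ((σ 1 * (σ 3)⁻¹ : BraidGroup 6) ^ 9)⁻¹ * (A * ((σ 1 : BraidGroup 6) ^ 10)⁻¹) *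
          (σ 1 * (σ 2)⁻¹) * (A * ((σ 1 : BraidGroup 6) ^ 10)⁻¹)⁻¹ * (σ 1 * (σ 3)⁻¹) ^ 10 := by
        group
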